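/- Let H be a finite-dimensional complex inner product space with anticommuting square-zero operators ∂, ∂̄ and adjoints ∂*, ∂̄*. Then H = ker Δ_A ⊕ (im ∂ + im ∂̄) ⊕ im((∂∂̄)*) orthogonally, where Δ_A is the Aeppli Laplacian; consequently ker Δ_A is isomorphic to the Aeppli cohomology (ker ∂∂̄)/(im ∂ + im ∂̄). -/

import Mathlib

open LinearMap Submodule

/-- The Aeppli Laplacian. -/
def deltaA {H : Type*} [AddCommGroup H] [Module ℂ H]
    (p q ps qs : H →ₗ[ℂ] H) : H →ₗ[ℂ] H :=
  p ∘ₗ ps + q ∘ₗ qs + (qs ∘ₗ ps) ∘ₗ (p ∘ₗ q) + (p ∘ₗ q) ∘ₗ (qs ∘ₗ ps)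
    + (p ∘ₗ qs) ∘ₗ (q ∘ₗ ps) + (q ∘ₗ ps) ∘ₗ (p ∘ₗ qs)

section
variable {H : Type*} [NormedAddCommGroup H] [InnerProductSpace ℂ H]
  {p q ps qs : H →ₗ[ℂ] H}

lemma adjL (hps : ∀ x y : H, (inner ℂ (p x) y : ℂ) = inner ℂ x (ps y)) (x y : H) :
    (inner ℂ (ps x) y : ℂ) = inner ℂ x (p y) := by
  rw [← inner_conj_symm, ← hps, inner_conj_symm]

lemma delta_inner (hps : ∀ x y : H, (inner ℂ (p x) y : ℂ) = inner ℂ x (ps y))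
    (hqs : ∀ x y : H, (inner ℂ (q x) y : ℂ) = inner ℂ x (qs y)) (x : H) :
    (inner ℂ (deltaA p q ps qs x) x : ℂ) =
      inner ℂ (ps x) (ps x) + inner ℂ (qs x) (qs x) + inner ℂ (p (q x)) (p (q x))
      + inner ℂ (qs (ps x)) (qs (ps x)) + inner ℂ (q (ps x)) (q (ps x))
      + inner ℂ (p (qs x)) (p (qs x)) := by
  have t1 := hps (ps x) x
  have t2 := hqs (qs x) x
  have t3 : (inner ℂ (qs (ps (p (q x)))) x : ℂ) = inner ℂ (p (q x)) (p (q x)) := by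
    rw [adjL hqs, adjL hps]
  have t4 : (inner ℂ (p (q (qs (ps x)))) x : ℂ) = inner ℂ (qs (ps x)) (qs (ps x)) := by
    rw [hps, hqs]
  have t5 : (inner ℂ (p (qs (q (ps x)))) x : ℂ) = inner ℂ (q (ps x)) (q (ps x)) := by
    rw [hps, adjL hqs]
  have t6 : (inner ℂ (q (ps (p (qs x)))) x : ℂ) = inner ℂ (p (qs x)) (p (qs x)) := by
    rw [hqs, adjL hps]
  simp only [deltaA, LinearMap.add_apply, LinearMap.comp_apply, inner_add_left]
  rw [t1, t2, t3, t4, t5, t6]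

lemma mem_kerA (hps : ∀ x y : H, (inner ℂ (p x) y : ℂ) = inner ℂ x (ps y))
    (hqs : ∀ x y : H, (inner ℂ (q x) y : ℂ) = inner ℂ x (qs y)) {x : H}
    (hx : deltaA p q ps qs x = 0) : ps x = 0 ∧ qs x = 0 ∧ p (q x) = 0 := by
  have h := delta_inner hps hqs x
  rw [hx, inner_zero_left] at h
  have h' : (0:ℝ) = ‖ps x‖^2 + ‖qs x‖^2 + ‖p (q x)‖^2 + ‖qs (ps x)‖^2
      + ‖q (ps x)‖^2 + ‖p (qs x)‖^2 := by
    have := congrArg (RCLike.re (K := ℂ)) h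
    simpa [map_add, inner_self_eq_norm_sq, ← Complex.ofReal_pow, Complex.ofReal_re] using this
  refine ⟨?_, ?_, ?_⟩ <;> rw [← norm_eq_zero] <;> nlinarith [norm_nonneg (ps x),
    norm_nonneg (qs x), norm_nonneg (p (q x)), norm_nonneg (qs (ps x)),
    norm_nonneg (q (ps x)), norm_nonneg (p (qs x)), sq_nonneg ‖ps x‖,
    sq_nonneg ‖qs x‖, sq_nonneg ‖p (q x)‖, sq_nonneg ‖qs (ps x)‖,
    sq_nonneg ‖q (ps x)‖, sq_nonneg ‖p (qs x)‖]

lemma mem_kerA' {x : H} (h1 : ps x = 0) (h2 : qs x = 0) (h3 : p (q x) = 0) :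
    deltaA p q ps qs x = 0 := by
  simp [deltaA, h1, h2, h3]

lemma pqp_eq (hp : p ∘ₗ p = 0) (hpq : p ∘ₗ q + q ∘ₗ p = 0) (x : H) :
    p (q (p x)) = 0 := by
  have h1 := LinearMap.congr_fun hpq (p x)
  have h2 := LinearMap.congr_fun hp x
  simp only [LinearMap.add_apply, LinearMap.comp_apply, LinearMap.zero_apply] at h1 h2
  rw [h2, map_zero] at h1
  simpa using h1

/-- `b ∈ im p ⊔ im q` implies `p (q b) = 0`. -/
lemma sup_mem_ker (hp : p ∘ₗ p = 0) (hq : q ∘ₗ q = 0)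
    (hpq : p ∘ₗ q + q ∘ₗ p = 0) {b : H}
    (hb : b ∈ LinearMap.range p ⊔ LinearMap.range q) : p (q b) = 0 := by
  obtain ⟨b1, ⟨x, rfl⟩, b2, ⟨y, rfl⟩, rfl⟩ := Submodule.mem_sup.mp hb
  have h1 : p (q (q y)) = 0 := by
    have := LinearMap.congr_fun hq y
    simp only [LinearMap.comp_apply, LinearMap.zero_apply] at this
    rw [this, map_zero]
  simp [map_add, pqp_eq hp hpq x, h1]

/-- elements of `ker Δ_A` are orthogonal to `im p ⊔ im q` (with the harmonic
element in the first slot). -/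
lemma kerA_orth_sup (hps : ∀ x y : H, (inner ℂ (p x) y : ℂ) = inner ℂ x (ps y))
    (hqs : ∀ x y : H, (inner ℂ (q x) y : ℂ) = inner ℂ x (qs y)) {a : H}
    (h1 : ps a = 0) (h2 : qs a = 0) {b : H}
    (hb : b ∈ LinearMap.range p ⊔ LinearMap.range q) : (inner ℂ a b : ℂ) = 0 := by
  obtain ⟨b1, ⟨x, rfl⟩, b2, ⟨y, rfl⟩, rfl⟩ := Submodule.mem_sup.mp hb
  rw [inner_add_right, ← inner_conj_symm a (p x), hps, h1,
    ← inner_conj_symm a (q y), hqs, h2]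
  simp

lemma kerA_orth_range (hps : ∀ x y : H, (inner ℂ (p x) y : ℂ) = inner ℂ x (ps y))
    (hqs : ∀ x y : H, (inner ℂ (q x) y : ℂ) = inner ℂ x (qs y)) {a : H}
    (h3 : p (q a) = 0) {c : H}
    (hc : c ∈ LinearMap.range (qs ∘ₗ ps)) : (inner ℂ a c : ℂ) = 0 := by
  obtain ⟨y, rfl⟩ := hc
  rw [LinearMap.comp_apply, ← hqs, ← hps, h3, inner_zero_left]

lemma sup_orth_range (hp : p ∘ₗ p = 0) (hq : q ∘ₗ q = 0)
    (hpq : p ∘ₗ q + q ∘ₗ p = 0)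
    (hps : ∀ x y : H, (inner ℂ (p x) y : ℂ) = inner ℂ x (ps y))
    (hqs : ∀ x y : H, (inner ℂ (q x) y : ℂ) = inner ℂ x (qs y)) {b : H}
    (hb : b ∈ LinearMap.range p ⊔ LinearMap.range q) {c : H}
    (hc : c ∈ LinearMap.range (qs ∘ₗ ps)) : (inner ℂ b c : ℂ) = 0 := by
  obtain ⟨y, rfl⟩ := hc
  rw [LinearMap.comp_apply, ← hqs, ← hps, sup_mem_ker hp hq hpq hb, inner_zero_left]

end

section
variable {H : Type*} [NormedAddCommGroup H] [InnerProductSpace ℂ H]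
  {p q ps qs : H →ₗ[ℂ] H}

lemma orth_eq_ker (hps : ∀ x y : H, (inner ℂ (p x) y : ℂ) = inner ℂ x (ps y))
    (hqs : ∀ x y : H, (inner ℂ (q x) y : ℂ) = inner ℂ x (qs y)) :
    ((LinearMap.range p ⊔ LinearMap.range q) ⊔ LinearMap.range (qs ∘ₗ ps))ᗮ
      = LinearMap.ker (deltaA p q ps qs) := by
  ext x
  rw [Submodule.mem_orthogonal, LinearMap.mem_ker]
  constructor
  · intro h
    have hpmem : ∀ y : H, p y ∈ (LinearMap.range p ⊔ LinearMap.range q)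
        ⊔ LinearMap.range (qs ∘ₗ ps) := fun y =>
      Submodule.mem_sup_left (Submodule.mem_sup_left ⟨y, rfl⟩)
    have hqmem : ∀ y : H, q y ∈ (LinearMap.range p ⊔ LinearMap.range q)
        ⊔ LinearMap.range (qs ∘ₗ ps) := fun y =>
      Submodule.mem_sup_left (Submodule.mem_sup_right ⟨y, rfl⟩)
    have hvmem : ∀ y : H, qs (ps y) ∈ (LinearMap.range p ⊔ LinearMap.range q)
        ⊔ LinearMap.range (qs ∘ₗ ps) := fun y =>
      Submodule.mem_sup_right ⟨y, rfl⟩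
    have e1 : ps x = 0 := by
      rw [← inner_self_eq_zero (𝕜 := ℂ), ← hps, h _ (hpmem (ps x))]
    have e2 : qs x = 0 := by
      rw [← inner_self_eq_zero (𝕜 := ℂ), ← hqs, h _ (hqmem (qs x))]
    have e3 : p (q x) = 0 := by
      rw [← inner_self_eq_zero (𝕜 := ℂ), ← adjL hps, ← adjL hqs,
        h _ (hvmem (p (q x)))]
    exact mem_kerA' e1 e2 e3
  · intro h u hu
    obtain ⟨e1, e2, e3⟩ := mem_kerA hps hqs h
    obtain ⟨u1, hu1, u2, ⟨y, rfl⟩, rfl⟩ := Submodule.mem_sup.mp hu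
    rw [inner_add_left]
    have h1 : (inner ℂ u1 x : ℂ) = 0 := by
      obtain ⟨v1, ⟨z, rfl⟩, v2, ⟨w, rfl⟩, rfl⟩ := Submodule.mem_sup.mp hu1
      rw [inner_add_left, hps, e1, hqs, e2, inner_zero_right, inner_zero_right,
        add_zero]
    rw [h1, LinearMap.comp_apply, adjL hqs, adjL hps, e3, inner_zero_right,
      add_zero]

end

/-- Orthogonal decomposition `H = ker Δ_A ⊕ (im ∂ + im ∂̄) ⊕ im (∂∂̄)*`, and the
resulting isomorphism between `Δ_A`-harmonic elements and Aeppli cohomology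
`(ker ∂∂̄)/(im ∂ + im ∂̄)`. -/
theorem stmt11 {H : Type*} [NormedAddCommGroup H] [InnerProductSpace ℂ H]
    [FiniteDimensional ℂ H]
    (p q ps qs : H →ₗ[ℂ] H)
    (hp : p ∘ₗ p = 0) (hq : q ∘ₗ q = 0) (hpq : p ∘ₗ q + q ∘ₗ p = 0)
    (hps : ∀ x y : H, (inner ℂ (p x) y : ℂ) = inner ℂ x (ps y))
    (hqs : ∀ x y : H, (inner ℂ (q x) y : ℂ) = inner ℂ x (qs y)) :
    (∀ v : H, ∃ a ∈ LinearMap.ker (deltaA p q ps qs),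
      ∃ b ∈ LinearMap.range p ⊔ LinearMap.range q,
        ∃ c ∈ LinearMap.range (qs ∘ₗ ps), v = a + b + c) ∧
    (∀ a ∈ LinearMap.ker (deltaA p q ps qs),
      ∀ b ∈ LinearMap.range p ⊔ LinearMap.range q, (inner ℂ a b : ℂ) = 0) ∧
    (∀ a ∈ LinearMap.ker (deltaA p q ps qs),
      ∀ c ∈ LinearMap.range (qs ∘ₗ ps), (inner ℂ a c : ℂ) = 0) ∧
    (∀ b ∈ LinearMap.range p ⊔ LinearMap.range q,
      ∀ c ∈ LinearMap.range (qs ∘ₗ ps), (inner ℂ b c : ℂ) = 0) ∧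
    Nonempty ((LinearMap.ker (deltaA p q ps qs) : Submodule ℂ H) ≃ₗ[ℂ]
      (LinearMap.ker (p ∘ₗ q) : Submodule ℂ H) ⧸
        Submodule.comap (LinearMap.ker (p ∘ₗ q)).subtype
          (LinearMap.range p ⊔ LinearMap.range q)) := by
  set T : Submodule ℂ H :=
    (LinearMap.range p ⊔ LinearMap.range q) ⊔ LinearMap.range (qs ∘ₗ ps) with hT
  -- the decomposition
  have hdec : ∀ v : H, ∃ a ∈ LinearMap.ker (deltaA p q ps qs),
      ∃ b ∈ LinearMap.range p ⊔ LinearMap.range q,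
        ∃ c ∈ LinearMap.range (qs ∘ₗ ps), v = a + b + c := by
    intro v
    have htop : T ⊔ Tᗮ = ⊤ := Submodule.sup_orthogonal_of_hasOrthogonalProjection
    have hv : v ∈ T ⊔ Tᗮ := htop ▸ Submodule.mem_top
    obtain ⟨t, ht, a, ha, rfl⟩ := Submodule.mem_sup.mp hv
    obtain ⟨b, hb, c, hc, rfl⟩ := Submodule.mem_sup.mp ht
    refine ⟨a, ?_, b, hb, c, hc, by abel⟩
    rw [← orth_eq_ker hps hqs]
    exact ha
  refine ⟨hdec, ?_, ?_, ?_, ?_⟩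
  · intro a ha b hb
    obtain ⟨e1, e2, _⟩ := mem_kerA hps hqs (LinearMap.mem_ker.mp ha)
    exact kerA_orth_sup hps hqs e1 e2 hb
  · intro a ha c hc
    obtain ⟨_, _, e3⟩ := mem_kerA hps hqs (LinearMap.mem_ker.mp ha)
    exact kerA_orth_range hps hqs e3 hc
  · intro b hb c hc
    exact sup_orth_range hp hq hpq hps hqs hb hc
  -- the isomorphism
  · have hKle : LinearMap.ker (deltaA p q ps qs) ≤ LinearMap.ker (p ∘ₗ q) := by
      intro a ha
      obtain ⟨_, _, e3⟩ := mem_kerA hps hqs (LinearMap.mem_ker.mp ha)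
      simpa [LinearMap.mem_ker] using e3
    set N := Submodule.comap (LinearMap.ker (p ∘ₗ q)).subtype
      (LinearMap.range p ⊔ LinearMap.range q) with hN
    set f : (LinearMap.ker (deltaA p q ps qs) : Submodule ℂ H) →ₗ[ℂ]
        ((LinearMap.ker (p ∘ₗ q) : Submodule ℂ H) ⧸ N) :=
      N.mkQ ∘ₗ Submodule.inclusion hKle with hf
    have hinj : Function.Injective f := by
      rw [injective_iff_map_eq_zero]
      intro a h0
      have hmem : ((a : H)) ∈ LinearMap.range p ⊔ LinearMap.range q := by
        have := (Submodule.Quotient.mk_eq_zero N).mp h0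
        simpa [hN, Submodule.mem_comap] using this
      obtain ⟨e1, e2, _⟩ := mem_kerA hps hqs (LinearMap.mem_ker.mp a.2)
      have : (inner ℂ (a : H) (a : H) : ℂ) = 0 :=
        kerA_orth_sup hps hqs e1 e2 hmem
      exact Subtype.ext (inner_self_eq_zero.mp this)
    have hsurj : Function.Surjective f := by
      intro z
      obtain ⟨x, rfl⟩ := Submodule.mkQ_surjective N z
      obtain ⟨a, ha, b, hb, c, hc, hx⟩ := hdec (x : H)
      -- show c = 0
      have hpqx : p (q (x : H)) = 0 := by
        exact LinearMap.mem_ker.mp x.2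
      obtain ⟨_, _, e3⟩ := mem_kerA hps hqs (LinearMap.mem_ker.mp ha)
      have hpqb : p (q b) = 0 := sup_mem_ker hp hq hpq hb
      have hpqc : p (q c) = 0 := by
        have hc' : c = (x : H) - a - b := by rw [hx]; abel
        rw [hc', map_sub, map_sub, map_sub, map_sub, hpqx, e3, hpqb]
        abel
      have hc0 : c = 0 := by
        obtain ⟨y, hy⟩ := hc
        have hpqc' : p (q (qs (ps y))) = 0 := by
          rw [show qs (ps y) = c from hy]; exact hpqc
        rw [← inner_self_eq_zero (𝕜 := ℂ)]
        conv_lhs => rw [← hy]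
        rw [LinearMap.comp_apply, ← hqs, ← hps, hpqc', inner_zero_left]
      have hxab : (x : H) = a + b := by rw [hx, hc0, add_zero]
      refine ⟨⟨a, ha⟩, ?_⟩
      have hmem : (⟨a, hKle ha⟩ : LinearMap.ker (p ∘ₗ q)) - x ∈ N := by
        simp only [hN, Submodule.mem_comap]
        have : ((⟨a, hKle ha⟩ : LinearMap.ker (p ∘ₗ q)) - x : LinearMap.ker (p ∘ₗ q))
            = (⟨a - (x:H), sub_mem (hKle ha) x.2⟩ : LinearMap.ker (p ∘ₗ q)) := rfl
        rw [this]
        have hab : a - (x : H) = -b := by rw [hxab]; abel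
        simpa [hab] using (LinearMap.range p ⊔ LinearMap.range q).neg_mem hb
      calc f ⟨a, ha⟩ = N.mkQ ⟨a, hKle ha⟩ := rfl
        _ = N.mkQ x := by
            rw [Submodule.mkQ_apply, Submodule.mkQ_apply, Submodule.Quotient.eq]
            exact hmem
    exact ⟨LinearEquiv.ofBijective f ⟨hinj, hsurj⟩⟩
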